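/- For any choice of signs s₁,s₂,s₃,s₄ ∈ {1,-1} with s₁s₂s₃s₄ = 1 (an even number of minus signs), the product of projectors ((1+s₁·X⊗X⊗X)/2)·((1+s₂·X⊗Y⊗Y)/2)·((1+s₃·Y⊗X⊗Y)/2)·((1+s₄·Y⊗Y⊗X)/2) equals the zero matrix. -/

import Mathlib

open Matrix Kronecker Complex

noncomputable def PauliX : Matrix (Fin 2) (Fin 2) ℂ := !![0, 1; 1, 0]
noncomputable def PauliY : Matrix (Fin 2) (Fin 2) ℂ := !![0, -I; I, 0]

lemma hXX : PauliX * PauliX = 1 := by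
  ext i j; fin_cases i <;> fin_cases j <;>
    simp [PauliX, Matrix.mul_apply, Fin.sum_univ_two, Matrix.one_apply]
lemma hYY : PauliY * PauliY = 1 := by
  ext i j; fin_cases i <;> fin_cases j <;>
    simp [PauliY, Matrix.mul_apply, Fin.sum_univ_two, Matrix.one_apply]
lemma hXY : PauliX * PauliY = -(PauliY * PauliX) := by
  ext i j; fin_cases i <;> fin_cases j <;>
    simp [PauliX, PauliY, Matrix.mul_apply, Fin.sum_univ_two]

noncomputable def MA := PauliX ⊗ₖ PauliX ⊗ₖ PauliX
noncomputable def MB := PauliX ⊗ₖ PauliY ⊗ₖ PauliY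
noncomputable def MC := PauliY ⊗ₖ PauliX ⊗ₖ PauliY
noncomputable def MD := PauliY ⊗ₖ PauliY ⊗ₖ PauliX

lemma negk {m n p q : Type*} (M : Matrix m n ℂ) (N : Matrix p q ℂ) :
    (-M) ⊗ₖ N = -(M ⊗ₖ N) := by
  ext ⟨i,k⟩ ⟨j,l⟩; simp [Matrix.kroneckerMap_apply]
lemma kneg {m n p q : Type*} (M : Matrix m n ℂ) (N : Matrix p q ℂ) :
    M ⊗ₖ (-N) = -(M ⊗ₖ N) := by
  ext ⟨i,k⟩ ⟨j,l⟩; simp [Matrix.kroneckerMap_apply]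

lemma hA2 : MA * MA = 1 := by
  simp [MA, ← Matrix.mul_kronecker_mul, hXX, Matrix.one_kronecker_one]
lemma hB2 : MB * MB = 1 := by
  simp [MB, ← Matrix.mul_kronecker_mul, hXX, hYY, Matrix.one_kronecker_one]
lemma hC2 : MC * MC = 1 := by
  simp [MC, ← Matrix.mul_kronecker_mul, hXX, hYY, Matrix.one_kronecker_one]

lemma hBA : MB * MA = MA * MB := by
  rw [MA, MB, ← Matrix.mul_kronecker_mul, ← Matrix.mul_kronecker_mul,
      ← Matrix.mul_kronecker_mul, ← Matrix.mul_kronecker_mul, hXX, hXY]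
  simp [negk, kneg]
lemma hCA : MC * MA = MA * MC := by
  rw [MA, MC, ← Matrix.mul_kronecker_mul, ← Matrix.mul_kronecker_mul,
      ← Matrix.mul_kronecker_mul, ← Matrix.mul_kronecker_mul, hXX, hXY]
  simp [negk, kneg]
lemma hCB : MC * MB = MB * MC := by
  rw [MB, MC, ← Matrix.mul_kronecker_mul, ← Matrix.mul_kronecker_mul,
      ← Matrix.mul_kronecker_mul, ← Matrix.mul_kronecker_mul, hXY, hYY]
  simp [negk, kneg]

lemma hABC : MA * MB * MC = -MD := by
  rw [MA, MB, MC, MD, ← Matrix.mul_kronecker_mul, ← Matrix.mul_kronecker_mul,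
      ← Matrix.mul_kronecker_mul, ← Matrix.mul_kronecker_mul, hXX]
  have h1 : PauliX * PauliY * PauliY = PauliX := by rw [mul_assoc, hYY, mul_one]
  have h2 : (1 : Matrix (Fin 2) (Fin 2) ℂ) * PauliY = PauliY := one_mul _
  have h3 : PauliX * PauliY * PauliX = -(PauliY * (PauliX * PauliX)) := by
    rw [hXY]; noncomm_ring
  rw [h1, h2, h3, hXX, mul_one]
  simp [negk, kneg]

lemma key_alg {M : Type*} [Ring M] (a b c : M)
    (ha : a * a = 1) (hb : b * b = 1) (hc : c * c = 1)
    (hba : b * a = a * b) (hca : c * a = a * c) (hcb : c * b = b * c) :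
    (1 + a) * (1 + b) * (1 + c) * (1 + -(a * b * c)) = 0 := by
  have hba' : ∀ x : M, b * (a * x) = a * (b * x) := fun x => by
    rw [← mul_assoc, hba, mul_assoc]
  have hca' : ∀ x : M, c * (a * x) = a * (c * x) := fun x => by
    rw [← mul_assoc, hca, mul_assoc]
  have hcb' : ∀ x : M, c * (b * x) = b * (c * x) := fun x => by
    rw [← mul_assoc, hcb, mul_assoc]
  have ha' : ∀ x : M, a * (a * x) = x := fun x => by rw [← mul_assoc, ha, one_mul]
  have hb' : ∀ x : M, b * (b * x) = x := fun x => by rw [← mul_assoc, hb, one_mul]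
  have hc' : ∀ x : M, c * (c * x) = x := fun x => by rw [← mul_assoc, hc, one_mul]
  simp only [mul_add, add_mul, mul_one, one_mul, mul_neg, neg_mul, mul_assoc,
    hba, hca, hcb, hba', hca', hcb', ha, hb, hc, ha', hb', hc']
  abel

theorem even_sign_projector_product_zero
    (s₁ s₂ s₃ s₄ : ℂ)
    (h₁ : s₁ = 1 ∨ s₁ = -1) (h₂ : s₂ = 1 ∨ s₂ = -1)
    (h₃ : s₃ = 1 ∨ s₃ = -1) (h₄ : s₄ = 1 ∨ s₄ = -1)
    (hprod : s₁ * s₂ * s₃ * s₄ = 1) :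
    ((1/2 : ℂ) • ((1 : Matrix ((Fin 2 × Fin 2) × Fin 2) ((Fin 2 × Fin 2) × Fin 2) ℂ)
        + s₁ • (PauliX ⊗ₖ PauliX ⊗ₖ PauliX))) *
    ((1/2 : ℂ) • (1 + s₂ • (PauliX ⊗ₖ PauliY ⊗ₖ PauliY))) *
    ((1/2 : ℂ) • (1 + s₃ • (PauliY ⊗ₖ PauliX ⊗ₖ PauliY))) *
    ((1/2 : ℂ) • (1 + s₄ • (PauliY ⊗ₖ PauliY ⊗ₖ PauliX))) = 0 := by
  have hs1 : s₁ * s₁ = 1 := by rcases h₁ with rfl | rfl <;> norm_num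
  have hs2 : s₂ * s₂ = 1 := by rcases h₂ with rfl | rfl <;> norm_num
  have hs3 : s₃ * s₃ = 1 := by rcases h₃ with rfl | rfl <;> norm_num
  have hs4 : s₄ = s₁ * s₂ * s₃ := by
    rcases h₁ with rfl | rfl <;> rcases h₂ with rfl | rfl <;>
      rcases h₃ with rfl | rfl <;> rcases h₄ with rfl | rfl <;> revert hprod <;> norm_num
  show ((1/2 : ℂ) • (1 + s₁ • MA)) * ((1/2 : ℂ) • (1 + s₂ • MB)) *
    ((1/2 : ℂ) • (1 + s₃ • MC)) * ((1/2 : ℂ) • (1 + s₄ • MD)) = 0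
  have hd : s₄ • MD = -((s₁ • MA) * (s₂ • MB) * (s₃ • MC)) := by
    simp only [smul_mul_assoc, mul_smul_comm, smul_smul, hABC, hs4]
    rw [smul_neg, neg_neg]
    ring_nf
  have key : (1 + s₁ • MA) * (1 + s₂ • MB) * (1 + s₃ • MC) * (1 + s₄ • MD) = 0 := by
    rw [hd]
    apply key_alg
    · simp [smul_mul_assoc, mul_smul_comm, smul_smul, hA2, hs1]
    · simp [smul_mul_assoc, mul_smul_comm, smul_smul, hB2, hs2]
    · simp [smul_mul_assoc, mul_smul_comm, smul_smul, hC2, hs3]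
    · simp only [smul_mul_assoc, mul_smul_comm, smul_smul, hBA, mul_comm s₂ s₁]
    · simp only [smul_mul_assoc, mul_smul_comm, smul_smul, hCA, mul_comm s₃ s₁]
    · simp only [smul_mul_assoc, mul_smul_comm, smul_smul, hCB, mul_comm s₃ s₂]
  calc ((1/2 : ℂ) • (1 + s₁ • MA)) * ((1/2 : ℂ) • (1 + s₂ • MB)) *
      ((1/2 : ℂ) • (1 + s₃ • MC)) * ((1/2 : ℂ) • (1 + s₄ • MD))
      = ((1/2 : ℂ)^4) • ((1 + s₁ • MA) * (1 + s₂ • MB) * (1 + s₃ • MC) * (1 + s₄ • MD)) := by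
        simp only [smul_mul_assoc, mul_smul_comm, smul_smul]; ring_nf
    _ = 0 := by rw [key, smul_zero]
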